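/- Let M ≥ 0 be an integer, s ≥ 0 and N ≥ 1 real numbers, and let P ⊆ {l/2^{M+1} : l odd, 1 ≤ l < 2^{M+1}} be any set of K points of this form (K = |P|). Then the number of pairs (x, y) with x ∈ {k/2^M : 0 ≤ k < 2^M}, y ∈ P, and ‖x - y‖ ≤ s/N equals ⌈⌊(s/N)·2^{M+1}⌋/2⌉ · K · 2, provided ⌊(s/N)·2^{M+1}⌋ < 2^M. -/

import Mathlib

open scoped Classical

/-- Radical-inverse function in base 2. -/
noncomputable def g2 (n : ℕ) : ℝ :=
  ∑ j ∈ Finset.range (n + 1), (if n.testBit j then ((2 : ℝ) ^ (j + 1))⁻¹ else 0)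

/-- Van der Corput sequence in base 2, indexed from 1, with x₁ = 0. -/
noncomputable def vdc (i : ℕ) : ℝ := g2 (i - 1)

/-- Distance to the nearest integer. -/
noncomputable def nint (x : ℝ) : ℝ := |x - round x|



lemma nint_add_int (x : ℝ) (j : ℤ) : nint (x + j) = nint x := by
  unfold nint
  rw [round_add_intCast]
  push_cast
  ring_nf

lemma nint_eq_abs (x : ℝ) (h1 : -(1/2) ≤ x) (h2 : x < 1/2) : nint x = |x| := by
  unfold nint
  rw [round_eq_zero_iff.2 ⟨h1, h2⟩]
  simp

-- key: nint of z/n equals |bmod z n|/n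
lemma nint_int_div (z : ℤ) (n : ℕ) (hn : 0 < n) :
    nint ((z : ℝ) / n) = |((z.bmod n : ℤ) : ℝ)| / n := by
  obtain ⟨q, hq⟩ := Int.dvd_bmod_sub_self (x := z) (m := n)
  set r := z.bmod n with hr
  have hz : (z : ℝ) = (r : ℝ) - n * q := by
    have : (r : ℤ) - z = n * q := hq
    have := congrArg (fun t : ℤ => (t : ℝ)) this
    push_cast at this
    linarith
  have hnR : (0 : ℝ) < n := by exact_mod_cast hn
  have hdiv : (z : ℝ) / n = (r : ℝ) / n + (-q : ℤ) := by
    push_cast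
    field_simp
    linarith
  rw [hdiv, nint_add_int, nint_eq_abs, abs_div, abs_of_pos hnR]
  · have h1 : -((n : ℤ) / 2) ≤ r := Int.le_bmod hn
    have h2 : r < ((n : ℤ) + 1) / 2 := Int.bmod_lt hn
    have h1' : -(n : ℝ) ≤ 2 * r := by
      have : -(n : ℤ) ≤ 2 * r := by omega
      exact_mod_cast this
    rw [le_div_iff₀ hnR] at *
    nlinarith [h1']
  · have h2 : r < ((n : ℤ) + 1) / 2 := Int.bmod_lt hn
    have h2' : 2 * (r : ℝ) < n := by
      have : 2 * r < (n : ℤ) := by omega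
      exact_mod_cast this
    rw [div_lt_iff₀ hnR]
    nlinarith

-- count odds in Icc (-n) n
lemma card_odd_Icc (n : ℕ) :
    ((Finset.Icc (-(n:ℤ)) n).filter (fun r => Odd r)).card = (n+1)/2*2 := by
  induction n with
  | zero => decide
  | succ n ih =>
    have hins : Finset.Icc (-((n:ℤ)+1)) ((n:ℤ)+1)
        = insert (-((n:ℤ)+1)) (insert ((n:ℤ)+1) (Finset.Icc (-(n:ℤ)) n)) := by
      ext x
      simp only [Finset.mem_Icc, Finset.mem_insert]
      omega
    push_cast
    rw [hins]
    rcases Nat.even_or_odd (n+1) with he | ho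
    · obtain ⟨c, hc⟩ := he
      have h1 : ¬ Odd ((n:ℤ)+1) := by rw [Int.odd_iff]; omega
      have h2 : ¬ Odd (-((n:ℤ)+1)) := by rw [Int.odd_iff]; omega
      rw [Finset.filter_insert, Finset.filter_insert, if_neg h2, if_neg h1, ih]
      omega
    · obtain ⟨c, hc⟩ := ho
      have h1 : Odd ((n:ℤ)+1) := by rw [Int.odd_iff]; omega
      have h2 : Odd (-((n:ℤ)+1)) := by rw [Int.odd_iff]; omega
      rw [Finset.filter_insert, Finset.filter_insert, if_pos h2, if_pos h1,
        Finset.card_insert_of_notMem, Finset.card_insert_of_notMem, ih]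
      · omega
      · simp only [Finset.mem_filter, Finset.mem_Icc]; omega
      · simp only [Finset.mem_insert, Finset.mem_filter, Finset.mem_Icc]; omega

lemma bmod_self_small (M : ℕ) (r : ℤ) (h1 : -(2^M) < r) (h2 : r < 2^M) :
    Int.bmod r (2^(M+1)) = r := by
  have hn : ((2^(M+1) : ℕ) : ℤ) = 2 * 2^M := by push_cast; ring
  have hM : (1 : ℤ) ≤ 2^M := one_le_pow₀ (by norm_num)
  have hhalf : (((2^(M+1) : ℕ) : ℤ) + 1) / 2 = 2^M := by rw [hn]; omega
  rcases le_or_gt 0 r with hr | hr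
  · rw [Int.bmod_pos]
    · exact Int.emod_eq_of_lt hr (by omega)
    · rw [Int.emod_eq_of_lt hr (by omega), hhalf]; exact h2
  · have hmod : r % ((2^(M+1) : ℕ) : ℤ) = r + 2 * 2^M := by
      have : r % ((2^(M+1) : ℕ) : ℤ) = (r + ((2^(M+1):ℕ):ℤ) * 1) % ((2^(M+1):ℕ):ℤ) := by
        rw [Int.add_mul_emod_self_left]
      rw [this, mul_one, Int.emod_eq_of_lt (by omega) (by omega), hn]
    rw [Int.bmod_neg]
    · rw [hmod, hn]; ring
    · rw [hmod, hhalf]; omega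

lemma bmod_odd (M : ℕ) (z : ℤ) (hz : Odd z) : Odd (z.bmod (2^(M+1))) := by
  obtain ⟨q, hq⟩ := Int.dvd_bmod_sub_self (x := z) (m := 2^(M+1))
  obtain ⟨a, ha⟩ := hz
  have hn : ((2^(M+1) : ℕ) : ℤ) = 2 * 2^M := by push_cast; ring
  exact ⟨a + 2^M * q, by rw [hn] at hq; linarith⟩

lemma key_bmod (M : ℕ) (l r : ℤ) (hd : (2:ℤ) ∣ (r+l)) (h1 : -(2^M) < r) (h2 : r < 2^M) :
    (2*(((r + l)/2) % 2^M) - l).bmod (2^(M+1)) = r := by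
  have hn : ((2^(M+1) : ℕ) : ℤ) = 2 * 2^M := by push_cast; ring
  have h2d : 2 * ((r+l)/2) = r + l := Int.mul_ediv_cancel' hd
  have hemod : ((r+l)/2) % (2^M : ℤ) = (r+l)/2 - 2^M * ((r+l)/2 / 2^M) := Int.emod_def _ _
  have he : 2*(((r + l)/2) % 2^M) - l = r + ((2^(M+1):ℕ):ℤ) * (-((r+l)/2 / 2^M)) := by
    rw [hemod, hn]; ring_nf; linarith
  rw [he, Int.add_mul_bmod_self_left]
  exact bmod_self_small M r h1 h2

lemma inner_count (M : ℕ) (t : ℝ) (ht : 0 ≤ t) (l : ℤ) (hlodd : Odd l)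
    (hm : ⌊t * 2^(M+1)⌋ < 2^M) :
    ((Finset.range (2^M)).filter
        (fun k : ℕ => nint ((k:ℝ)/2^M - (l:ℝ)/2^(M+1)) ≤ t)).card
      = ((⌊t * 2^(M+1)⌋.toNat + 1)/2)*2 := by
  set m : ℤ := ⌊t * 2^(M+1)⌋ with hmdef
  have hm0 : 0 ≤ m := Int.floor_nonneg.2 (by positivity)
  have hMpos : (0:ℝ) < 2^M := by positivity
  have hnpos : 0 < 2^(M+1) := Nat.pow_pos (by norm_num)
  have hnR : ((2^(M+1):ℕ) : ℝ) = 2^(M+1) := by push_cast; ring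
  have hM1 : (1 : ℤ) ≤ 2^M := one_le_pow₀ (by norm_num)
  -- characterization of the condition
  have hchar : ∀ k : ℕ, (nint ((k:ℝ)/2^M - (l:ℝ)/2^(M+1)) ≤ t ↔
      |(2*(k:ℤ) - l).bmod (2^(M+1))| ≤ m) := by
    intro k
    have he : (k:ℝ)/2^M - (l:ℝ)/2^(M+1) = ((2*(k:ℤ) - l : ℤ) : ℝ) / ((2^(M+1):ℕ) : ℝ) := by
      rw [hnR]; push_cast; field_simp; ring
    rw [he, nint_int_div _ _ hnpos, div_le_iff₀ (by rw [hnR]; positivity), hnR]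
    rw [← Int.cast_abs]
    exact Int.le_floor.symm
  rw [Finset.filter_congr (fun k _ => by rw [hchar k])]
  have hbij : ((Finset.range (2^M)).filter
        (fun k : ℕ => |(2*(k:ℤ) - l).bmod (2^(M+1))| ≤ m)).card
      = ((Finset.Icc (-m) m).filter (fun r => Odd r)).card := by
    apply Finset.card_nbij' (fun k : ℕ => (2*(k:ℤ) - l).bmod (2^(M+1)))
        (fun r => (((r + l)/2) % 2^M).toNat)
    · intro k hk
      simp only [Finset.mem_coe, Finset.mem_filter, Finset.mem_range, Finset.mem_Icc] at hk ⊢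
      refine ⟨abs_le.1 hk.2, bmod_odd M _ ?_⟩
      obtain ⟨a, ha⟩ := hlodd
      exact ⟨k - a - 1, by omega⟩
    · intro r hr
      simp only [Finset.mem_coe, Finset.mem_filter, Finset.mem_Icc] at hr
      obtain ⟨⟨hr1, hr2⟩, hrodd⟩ := hr
      have h2d : (2:ℤ) ∣ (r + l) := (hrodd.add_odd hlodd).two_dvd
      have hkval : ((((r + l)/2) % 2^M).toNat : ℤ) = ((r + l)/2) % (2^M : ℤ) :=
        Int.toNat_of_nonneg (Int.emod_nonneg _ (by positivity))
      have hbmod : (2*(((((r + l)/2) % (2^M:ℤ)).toNat : ℤ)) - l).bmod (2^(M+1)) = r := by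
        rw [hkval]
        exact key_bmod M l r h2d (by omega) (by omega)
      simp only [Finset.mem_coe, Finset.mem_filter, Finset.mem_range]
      constructor
      · have hklt : ((r + l)/2) % (2^M : ℤ) < 2^M := Int.emod_lt_of_pos _ (by positivity)
        have : ((((r + l)/2) % (2^M:ℤ)).toNat : ℤ) < ((2^M : ℕ) : ℤ) := by
          rw [hkval]; exact_mod_cast hklt
        exact_mod_cast this
      · rw [hbmod]; exact abs_le.2 ⟨hr1, hr2⟩
    · intro k hk
      simp only [Finset.mem_coe, Finset.mem_filter, Finset.mem_range] at hk
      obtain ⟨q, hq⟩ := Int.dvd_bmod_sub_self (x := 2*(k:ℤ) - l) (m := 2^(M+1))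
      have hn : ((2^(M+1) : ℕ) : ℤ) = 2 * 2^M := by push_cast; ring
      have he1 : ((2*(k:ℤ) - l).bmod (2^(M+1)) + l) / 2 = k + 2^M * q := by
        have he2 : (2*(k:ℤ) - l).bmod (2^(M+1)) + l = 2 * (k + 2^M * q) := by
          rw [hn] at hq; linarith
        rw [he2]; exact Int.mul_ediv_cancel_left _ (by norm_num)
      beta_reduce
      rw [he1]
      have he3 : ((k:ℤ) + 2^M * q) % (2^M:ℤ) = k := by
        rw [Int.add_mul_emod_self_left]
        exact Int.emod_eq_of_lt (by positivity) (by exact_mod_cast hk.1)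
      rw [he3]; simp
    · intro r hr
      simp only [Finset.mem_coe, Finset.mem_filter, Finset.mem_Icc] at hr
      obtain ⟨⟨hr1, hr2⟩, hrodd⟩ := hr
      have h2d : (2:ℤ) ∣ (r + l) := (hrodd.add_odd hlodd).two_dvd
      have hkval : ((((r + l)/2) % 2^M).toNat : ℤ) = ((r + l)/2) % (2^M : ℤ) :=
        Int.toNat_of_nonneg (Int.emod_nonneg _ (by positivity))
      beta_reduce
      rw [hkval]
      exact key_bmod M l r h2d (by omega) (by omega)
  rw [hbij]
  have : Finset.Icc (-m) m = Finset.Icc (-(m.toNat : ℤ)) (m.toNat : ℤ) := by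
    rw [Int.toNat_of_nonneg hm0]
  rw [this, card_odd_Icc]

lemma ceil_nat_div_two (a : ℕ) : ⌈((a:ℝ))/2⌉ = (((a+1)/2 : ℕ) : ℤ) := by
  have h1 : 2*((a+1)/2) ≤ a+1 := by omega
  have h2 : a+1 < 2*((a+1)/2)+2 := by omega
  have h1R : 2*(((a+1)/2 : ℕ) : ℝ) ≤ (a:ℝ)+1 := by exact_mod_cast h1
  have h2R : (a:ℝ)+1 < 2*(((a+1)/2 : ℕ) : ℝ)+2 := by exact_mod_cast h2
  have h3 : a ≤ 2*((a+1)/2) := by omega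
  have h3R : (a:ℝ) ≤ 2*(((a+1)/2 : ℕ) : ℝ) := by exact_mod_cast h3
  rw [Int.ceil_eq_iff, Int.cast_natCast]
  constructor
  · rw [lt_div_iff₀ (by norm_num : (0:ℝ) < 2)]
    linarith
  · rw [div_le_iff₀ (by norm_num : (0:ℝ) < 2)]
    linarith


/-- Finite empiric pair correlation function of the van der Corput sequence in base 2. -/
noncomputable def F (N : ℕ) (s : ℝ) : ℝ :=
  (((Finset.Icc 1 N ×ˢ Finset.Icc 1 N).filter
      (fun p => p.1 ≠ p.2 ∧ nint (vdc p.1 - vdc p.2) ≤ s / N)).card : ℝ) / N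

theorem stmt5 (M : ℕ) (s N : ℝ) (hs : 0 ≤ s) (hN : 1 ≤ N)
    (P : Finset ℝ)
    (hP : ∀ y ∈ P, ∃ l : ℕ, Odd l ∧ 1 ≤ l ∧ l < 2 ^ (M + 1) ∧ y = (l : ℝ) / 2 ^ (M + 1))
    (h : ⌊s / N * 2 ^ (M + 1)⌋ < 2 ^ M) :
    (((((Finset.range (2 ^ M)).image (fun k => (k : ℝ) / 2 ^ M)) ×ˢ P).filter
        (fun p => nint (p.1 - p.2) ≤ s / N)).card : ℤ)
      = ⌈(⌊s / N * 2 ^ (M + 1)⌋ : ℝ) / 2⌉ * P.card * 2 := by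
  classical
  set t : ℝ := s / N with htdef
  have ht : 0 ≤ t := div_nonneg hs (by linarith)
  have hXeq : (Finset.range (2 ^ M)).image (fun k => (k : ℝ) / 2 ^ M)
      = (Finset.range (2 ^ M)).image (fun k : ℕ => (k : ℝ) / 2 ^ M) := by
    ext x; simp
  rw [hXeq]
  set X := (Finset.range (2 ^ M)).image (fun k : ℕ => (k : ℝ) / 2 ^ M) with hX
  set m : ℤ := ⌊t * 2 ^ (M + 1)⌋ with hm
  have hm0 : 0 ≤ m := Int.floor_nonneg.2 (by positivity)
  set c : ℕ := ((m.toNat + 1)/2)*2 with hc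
  have hsum : ((X ×ˢ P).filter (fun p => nint (p.1 - p.2) ≤ t)).card
      = ∑ y ∈ P, (((X ×ˢ P).filter (fun p => nint (p.1 - p.2) ≤ t)).filter
          (fun p => p.2 = y)).card := by
    apply Finset.card_eq_sum_card_fiberwise
    intro p hp
    simp only [Finset.mem_coe, Finset.mem_filter, Finset.mem_product] at hp
    exact hp.1.2
  have hfiber : ∀ y ∈ P,
      ((((X ×ˢ P).filter (fun p => nint (p.1 - p.2) ≤ t)).filter (fun p => p.2 = y)).card :ℕ)
      = (X.filter (fun x => nint (x - y) ≤ t)).card := by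
    intro y hy
    apply Finset.card_nbij' Prod.fst (fun x => (x, y))
    · intro p hp
      simp only [Finset.mem_coe, Finset.mem_filter, Finset.mem_product] at hp ⊢
      obtain ⟨⟨⟨h1, _⟩, h2⟩, h3⟩ := hp
      exact ⟨h1, by rw [← h3]; exact h2⟩
    · intro x hx
      simp only [Finset.mem_coe, Finset.mem_filter, Finset.mem_product] at hx ⊢
      exact ⟨⟨⟨hx.1, hy⟩, hx.2⟩, by simp⟩
    · intro p hp
      simp only [Finset.mem_coe, Finset.mem_filter] at hp
      rw [← hp.2]
    · intro x _
      rfl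
  have hinner : ∀ y ∈ P, (X.filter (fun x => nint (x - y) ≤ t)).card = c := by
    intro y hy
    obtain ⟨l, hlodd, hl1, hl2, rfl⟩ := hP y hy
    rw [hX, Finset.filter_image, Finset.card_image_of_injOn]
    · have hlcast : ((l : ℤ) : ℝ) = (l : ℝ) := by push_cast; ring
      have hodd : Odd (l : ℤ) := by exact_mod_cast hlodd
      have := inner_count M t ht (l : ℤ) hodd (by rw [← hm]; exact_mod_cast h)
      rw [hlcast] at this
      rw [← hm] at this
      exact this
    · intro a _ b _ hab
      have : (a : ℝ) = b := by
        field_simp at hab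
        exact_mod_cast hab
      exact_mod_cast this
  have hcard : ((X ×ˢ P).filter (fun p => nint (p.1 - p.2) ≤ t)).card = P.card * c := by
    rw [hsum, Finset.sum_congr rfl (fun y hy => by rw [hfiber y hy, hinner y hy]),
      Finset.sum_const, smul_eq_mul]
  rw [hcard]
  have hmt : ((m : ℝ)) = ((m.toNat : ℕ) : ℝ) := by
    exact_mod_cast (Int.toNat_of_nonneg hm0).symm
  rw [hmt, ceil_nat_div_two]
  rw [hc]
  push_cast
  ring
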